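/- Let n ≥ 1 and let E, F, P, Q, X, Y, W, V be real n×n matrices satisfying the pencil relations E = (I − Q X) W, X − P = F X W, E Y V = Y − Q, and (I − P Y) V = F (i.e. M [I; X] = N [I; X] W and M [Y; I] V = N [Y; I] for the 2n×2n block matrices M = [[E, 0], [−P, I]] and N = [[I, −Q], [0, F]]). Assume ρ(W) ≤ 1, ρ(V) ≤ 1 and ρ(W)·ρ(V) < 1. Suppose (E_k, F_k, P_k, Q_k)_{k≥0} are sequences of real n×n matrices with E₀ = E, F₀ = F, P₀ = P, Q₀ = Q such that for every k the matrices I − Q_k P_k and I − P_k Q_k are invertible and E_{k+1} = E_k (I − Q_k P_k)⁻¹ E_k, P_{k+1} = P_k + F_k (I − P_k Q_k)⁻¹ P_k E_k, F_{k+1} = F_k (I − P_k Q_k)⁻¹ F_k, Q_{k+1} = Q_k + E_k (I − Q_k P_k)⁻¹ Q_k F_k. Then limsup_{k→∞} ‖X − P_k‖^{1/2^k} ≤ ρ(W)·ρ(V) and limsup_{k→∞} ‖Y − Q_k‖^{1/2^k} ≤ ρ(W)·ρ(V). -/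

import Mathlib

attribute [local instance] Matrix.linftyOpNormedRing Matrix.linftyOpNormedAlgebra

open Filter

variable {n : ℕ}

/-- The spectral radius of a real `n × n` matrix, with respect to the operator norm
`‖M‖ = max_i ∑_j |M i j|` induced by the supremum norm on `ℝⁿ`: it is
`ρ(M) = lim_{m → ∞} ‖M ^ m‖ ^ (1/m)`, which (by submultiplicativity of the norm,
via Fekete's lemma) equals `inf_{m ≥ 1} ‖M ^ m‖ ^ (1/m)`. -/
noncomputable def specRad (M : Matrix (Fin n) (Fin n) ℝ) : ℝ :=
  ⨅ m : ℕ, ‖M ^ (m + 1)‖ ^ (1 / (m + 1 : ℝ))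

/-- One step of the SDA recursion preserves the pencil relations, with `W`, `V`
replaced by their squares.  Pure (noncommutative) ring computation. -/
lemma sda_ring_step {R : Type*} [Ring R] (E F P Q X Y W V B C : R)
    (hB' : B * (1 - Q * P) = 1) (hC' : C * (1 - P * Q) = 1)
    (h1 : E = (1 - Q * X) * W) (h2 : X - P = F * X * W)
    (h3 : E * Y * V = Y - Q) (h4 : (1 - P * Y) * V = F) :
    E * B * E = (1 - (Q + E * B * (Q * F)) * X) * (W * W) ∧
    X - (P + F * C * (P * E)) = F * C * F * X * (W * W) ∧
    (E * B * E) * Y * (V * V) = Y - (Q + E * B * (Q * F)) ∧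
    (1 - (P + F * C * (P * E)) * Y) * (V * V) = F * C * F := by
  have k1 : F * X * (W * W) = (X - P) * W := by
    rw [show F * X * (W * W) = (F * X * W) * W by noncomm_ring, ← h2]
  have k3 : E * Y * (V * V) = (Y - Q) * V := by
    rw [show E * Y * (V * V) = (E * Y * V) * V by noncomm_ring, h3]
  refine ⟨?_, ?_, ?_, ?_⟩
  · have : (1 - (Q + E * B * (Q * F)) * X) * (W * W) = E * B * E := by
      calc (1 - (Q + E * B * (Q * F)) * X) * (W * W)
          = (1 - Q * X) * (W * W) - E * B * (Q * (F * X * (W * W))) := by noncomm_ring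
        _ = (1 - Q * X) * (W * W) - E * B * (Q * ((X - P) * W)) := by rw [k1]
        _ = ((1 - Q * X) * W) * W - E * B * (Q * ((X - P) * W)) := by noncomm_ring
        _ = E * W - E * B * (Q * ((X - P) * W)) := by rw [← h1]
        _ = E * (B * (1 - Q * P)) * W - E * B * (Q * ((X - P) * W)) := by rw [hB', mul_one]
        _ = E * B * (((1 - Q * P) - Q * (X - P)) * W) := by noncomm_ring
        _ = E * B * ((1 - Q * X) * W) := by noncomm_ring
        _ = E * B * E := by rw [← h1]
    exact this.symm
  · have : F * C * F * X * (W * W) = (X - P) - F * C * (P * E) := by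
      calc F * C * F * X * (W * W)
          = F * C * (F * X * (W * W)) := by noncomm_ring
        _ = F * C * ((X - P) * W) := by rw [k1]
        _ = F * C * ((1 - P * Q) * (X * W)) - F * C * (P * ((1 - Q * X) * W)) := by noncomm_ring
        _ = F * (C * (1 - P * Q)) * (X * W) - F * C * (P * E) := by rw [← h1]; noncomm_ring
        _ = F * (X * W) - F * C * (P * E) := by rw [hC', mul_one]
        _ = (X - P) - F * C * (P * E) := by
            rw [show F * (X * W) = F * X * W by noncomm_ring, ← h2]
    rw [this]; abel
  · calc (E * B * E) * Y * (V * V)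
        = E * B * (E * Y * (V * V)) := by noncomm_ring
      _ = E * B * ((Y - Q) * V) := by rw [k3]
      _ = E * B * ((1 - Q * P) * (Y * V)) - E * B * (Q * ((1 - P * Y) * V)) := by noncomm_ring
      _ = E * (B * (1 - Q * P)) * (Y * V) - E * B * (Q * F) := by rw [h4]; noncomm_ring
      _ = E * (Y * V) - E * B * (Q * F) := by rw [hB', mul_one]
      _ = (Y - Q) - E * B * (Q * F) := by
          rw [show E * (Y * V) = E * Y * V by noncomm_ring, h3]
      _ = Y - (Q + E * B * (Q * F)) := by abel
  · calc (1 - (P + F * C * (P * E)) * Y) * (V * V)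
        = (1 - P * Y) * (V * V) - F * C * (P * (E * Y * (V * V))) := by noncomm_ring
      _ = ((1 - P * Y) * V) * V - F * C * (P * ((Y - Q) * V)) := by rw [k3]; noncomm_ring
      _ = F * V - F * C * (P * ((Y - Q) * V)) := by rw [h4]
      _ = F * (C * (1 - P * Q)) * V - F * C * (P * ((Y - Q) * V)) := by rw [hC', mul_one]
      _ = F * C * (((1 - P * Q) - P * (Y - Q)) * V) := by noncomm_ring
      _ = F * C * ((1 - P * Y) * V) := by noncomm_ring
      _ = F * C * F := by rw [h4]

lemma specRad_nonneg (M : Matrix (Fin n) (Fin n) ℝ) : 0 ≤ specRad M :=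
  le_ciInf fun _ => Real.rpow_nonneg (norm_nonneg _) _

/-- Growth estimate: for every `ε > 0` there is `C ≥ 1` with
`‖M ^ m‖ ≤ C (ρ(M) + ε) ^ m` for all `m`. -/
lemma specRad_growth (hn : 1 ≤ n) (M : Matrix (Fin n) (Fin n) ℝ) {ε : ℝ} (hε : 0 < ε) :
    ∃ Cc : ℝ, 1 ≤ Cc ∧ ∀ m : ℕ, ‖M ^ m‖ ≤ Cc * (specRad M + ε) ^ m := by
  haveI : Nonempty (Fin n) := ⟨⟨0, hn⟩⟩
  set t := specRad M + ε with ht_def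
  have ht : 0 < t := add_pos_of_nonneg_of_pos (specRad_nonneg M) hε
  have hinf : (⨅ m : ℕ, ‖M ^ (m + 1)‖ ^ (1 / (m + 1 : ℝ))) < t := by
    rw [show (⨅ m : ℕ, ‖M ^ (m + 1)‖ ^ (1 / (m + 1 : ℝ))) = specRad M from rfl]
    exact lt_add_of_pos_right _ hε
  obtain ⟨m0, hm0⟩ := exists_lt_of_ciInf_lt hinf
  set N := m0 + 1 with hN_def
  have hNpos : 0 < N := Nat.succ_pos m0
  have hNR : (0:ℝ) < (N : ℝ) := by exact_mod_cast hNpos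
  have hMN : ‖M ^ N‖ < t ^ N := by
    have h0 : (0:ℝ) ≤ ‖M ^ N‖ := norm_nonneg _
    have heq : ‖M ^ N‖ = (‖M ^ N‖ ^ (1 / (N : ℝ))) ^ (N : ℕ) := by
      rw [← Real.rpow_natCast (‖M ^ N‖ ^ (1 / (N : ℝ))) N, ← Real.rpow_mul h0, one_div,
        inv_mul_cancel₀ hNR.ne', Real.rpow_one]
    rw [heq]
    have : ‖M ^ N‖ ^ (1 / (N : ℝ)) < t := by simpa [hN_def] using hm0
    exact pow_lt_pow_left₀ this (Real.rpow_nonneg h0 _) hNpos.ne'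
  set b := max ‖M‖ t with hb_def
  have hbt : t ≤ b := le_max_right _ _
  have hMb : ‖M‖ ≤ b := le_max_left _ _
  have hb : 0 < b := lt_of_lt_of_le ht hbt
  have hbt1 : 1 ≤ b / t := (one_le_div ht).mpr hbt
  refine ⟨(b / t) ^ N, one_le_pow₀ hbt1, fun m => ?_⟩
  have hmod : N * (m / N) + m % N = m := Nat.div_add_mod m N
  set q := m / N
  set r := m % N with hr_def
  have hrN : r < N := Nat.mod_lt _ hNpos
  calc ‖M ^ m‖ = ‖(M ^ N) ^ q * M ^ r‖ := by rw [← pow_mul, ← pow_add, hmod]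
    _ ≤ ‖(M ^ N) ^ q‖ * ‖M ^ r‖ := norm_mul_le _ _
    _ ≤ ‖M ^ N‖ ^ q * ‖M‖ ^ r := by
        apply mul_le_mul (norm_pow_le _ _) (norm_pow_le _ _) (norm_nonneg _) (by positivity)
    _ ≤ (t ^ N) ^ q * b ^ r := by
        apply mul_le_mul (pow_le_pow_left₀ (norm_nonneg _) hMN.le q)
          (pow_le_pow_left₀ (norm_nonneg _) hMb r) (by positivity) (by positivity)
    _ = t ^ (N * q) * ((t * (b / t)) ^ r) := by rw [pow_mul, mul_div_cancel₀ b ht.ne']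
    _ = t ^ (N * q + r) * (b / t) ^ r := by rw [mul_pow, pow_add]; ring
    _ ≤ t ^ m * (b / t) ^ N := by
        rw [hmod]
        exact mul_le_mul_of_nonneg_left (pow_le_pow_right₀ hbt1 hrN.le) (by positivity)
    _ = (b / t) ^ N * t ^ m := mul_comm _ _

/-- Analytic core: a sequence satisfying `u k ≤ (a + c u k) g k` with
`g k ≤ K s^(2^k)`, `0 < s < 1`, has `limsup u k ^ (2^{-k}) ≤ s`. -/
lemma sda_core (u g : ℕ → ℝ) (hu0 : ∀ k, 0 ≤ u k)
    (a c : ℝ) (ha : 0 ≤ a) (hc : 0 ≤ c)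
    (hrec : ∀ k, u k ≤ (a + c * u k) * g k)
    (s K : ℝ) (hs0 : 0 < s) (hs1 : s < 1) (hK : 0 ≤ K)
    (hg : ∀ k, g k ≤ K * s ^ 2 ^ k) :
    limsup (fun k : ℕ => u k ^ (1 / (2 : ℝ) ^ k)) atTop ≤ s := by
  set C' : ℝ := max 1 (2 * a * K) with hC'_def
  have hC1 : (1:ℝ) ≤ C' := le_max_left _ _
  have hC0 : (0:ℝ) < C' := lt_of_lt_of_le one_pos hC1
  have htend : Tendsto (fun k : ℕ => c * K * s ^ k) atTop (nhds 0) := by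
    have := (tendsto_pow_atTop_nhds_zero_of_lt_one hs0.le hs1).const_mul (c * K)
    simpa using this
  have hev : ∀ᶠ k in atTop, c * K * s ^ 2 ^ k ≤ 1 / 2 := by
    filter_upwards [htend.eventually (eventually_le_nhds (by norm_num : (0:ℝ) < 1/2))] with k hk
    calc c * K * s ^ 2 ^ k ≤ c * K * s ^ k := by
          apply mul_le_mul_of_nonneg_left
            (pow_le_pow_of_le_one hs0.le hs1.le (Nat.lt_two_pow_self (n := k)).le) (by positivity)
      _ ≤ 1 / 2 := hk
  have hbound : ∀ᶠ k in atTop, u k ≤ C' * s ^ 2 ^ k := by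
    filter_upwards [hev] with k hk
    have h1 : u k ≤ a * g k + c * u k * g k := by
      have := hrec k; nlinarith [this]
    have h2 : a * g k ≤ a * (K * s ^ 2 ^ k) := mul_le_mul_of_nonneg_left (hg k) ha
    have h3 : c * u k * g k ≤ (1 / 2) * u k := by
      have hcg : c * g k ≤ 1 / 2 := by
        calc c * g k ≤ c * (K * s ^ 2 ^ k) := mul_le_mul_of_nonneg_left (hg k) hc
          _ = c * K * s ^ 2 ^ k := by ring
          _ ≤ 1 / 2 := hk
      calc c * u k * g k = (c * g k) * u k := by ring
        _ ≤ (1 / 2) * u k := mul_le_mul_of_nonneg_right hcg (hu0 k)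
    have h4 : u k ≤ 2 * a * K * s ^ 2 ^ k := by nlinarith [hu0 k]
    calc u k ≤ 2 * a * K * s ^ 2 ^ k := h4
      _ ≤ C' * s ^ 2 ^ k := mul_le_mul_of_nonneg_right (le_max_right _ _) (by positivity)
  have hrpow : ∀ᶠ k in atTop, u k ^ (1 / (2 : ℝ) ^ k) ≤ C' ^ (1 / (2 : ℝ) ^ k) * s := by
    filter_upwards [hbound] with k hk
    have hek : (0:ℝ) ≤ 1 / (2 : ℝ) ^ k := by positivity
    calc u k ^ (1 / (2 : ℝ) ^ k) ≤ (C' * s ^ 2 ^ k) ^ (1 / (2 : ℝ) ^ k) :=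
          Real.rpow_le_rpow (hu0 k) hk hek
      _ = C' ^ (1 / (2 : ℝ) ^ k) * (s ^ 2 ^ k : ℝ) ^ (1 / (2 : ℝ) ^ k) :=
          Real.mul_rpow hC0.le (by positivity)
      _ = C' ^ (1 / (2 : ℝ) ^ k) * s := by
          congr 1
          rw [← Real.rpow_natCast s (2 ^ k), ← Real.rpow_mul hs0.le]
          rw [show ((2 ^ k : ℕ) : ℝ) * (1 / (2 : ℝ) ^ k) = 1 by push_cast; field_simp]
          exact Real.rpow_one s
  have htend2 : Tendsto (fun k : ℕ => C' ^ (1 / (2 : ℝ) ^ k) * s) atTop (nhds s) := by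
    have he : Tendsto (fun k : ℕ => 1 / (2 : ℝ) ^ k) atTop (nhds 0) := by
      simpa [one_div, ← inv_pow] using
        tendsto_pow_atTop_nhds_zero_of_lt_one (by norm_num : (0:ℝ) ≤ 1/2) (by norm_num)
    have hc2 : Tendsto (fun k : ℕ => C' ^ (1 / (2 : ℝ) ^ k)) atTop (nhds (C' ^ (0:ℝ))) :=
      (Real.continuousAt_const_rpow hC0.ne').tendsto.comp he
    rw [Real.rpow_zero] at hc2
    simpa using hc2.mul_const s
  have h1 : limsup (fun k : ℕ => u k ^ (1 / (2 : ℝ) ^ k)) atTop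
      ≤ limsup (fun k : ℕ => C' ^ (1 / (2 : ℝ) ^ k) * s) atTop :=
    limsup_le_limsup hrpow
      ((isBoundedUnder_of ⟨0, fun k => Real.rpow_nonneg (hu0 k) _⟩ :
        IsBoundedUnder (· ≥ ·) atTop _).isCoboundedUnder_le)
      htend2.isBoundedUnder_le
  rwa [htend2.limsup_eq] at h1

set_option maxHeartbeats 1000000 in
/-- Convergence of the structure-preserving doubling algorithm (SDA): if the pencil
relations `M [I; X] = N [I; X] W` and `M [Y; I] V = N [Y; I]` hold for
`M = [[E, 0], [−P, I]]`, `N = [[I, −Q], [0, F]]` (blockwise: `E = (I − Q X) W`,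
`X − P = F X W`, `E Y V = Y − Q`, `(I − P Y) V = F`), with `ρ(W) ≤ 1`, `ρ(V) ≤ 1`
and `ρ(W) ρ(V) < 1`, and if the SDA iteration can be carried out with no breakdown,
then `limsup ‖X − P_k‖^(1/2^k) ≤ ρ(W) ρ(V)` and `limsup ‖Y − Q_k‖^(1/2^k) ≤ ρ(W) ρ(V)`. -/
theorem sda_convergence (hn : 1 ≤ n)
    (E F P Q X Y W V : Matrix (Fin n) (Fin n) ℝ)
    (h1 : E = (1 - Q * X) * W)
    (h2 : X - P = F * X * W)
    (h3 : E * Y * V = Y - Q)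
    (h4 : (1 - P * Y) * V = F)
    (hW : specRad W ≤ 1) (hV : specRad V ≤ 1) (hWV : specRad W * specRad V < 1)
    (Ek Fk Pk Qk : ℕ → Matrix (Fin n) (Fin n) ℝ)
    (hE0 : Ek 0 = E) (hF0 : Fk 0 = F) (hP0 : Pk 0 = P) (hQ0 : Qk 0 = Q)
    (hinv1 : ∀ k, IsUnit (1 - Qk k * Pk k))
    (hinv2 : ∀ k, IsUnit (1 - Pk k * Qk k))
    (hEk : ∀ k, Ek (k + 1) = Ek k * (1 - Qk k * Pk k)⁻¹ * Ek k)
    (hPk : ∀ k, Pk (k + 1) = Pk k + Fk k * (1 - Pk k * Qk k)⁻¹ * (Pk k * Ek k))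
    (hFk : ∀ k, Fk (k + 1) = Fk k * (1 - Pk k * Qk k)⁻¹ * Fk k)
    (hQk : ∀ k, Qk (k + 1) = Qk k + Ek k * (1 - Qk k * Pk k)⁻¹ * (Qk k * Fk k)) :
    limsup (fun k : ℕ => ‖X - Pk k‖ ^ (1 / (2 : ℝ) ^ k)) atTop ≤ specRad W * specRad V ∧
    limsup (fun k : ℕ => ‖Y - Qk k‖ ^ (1 / (2 : ℝ) ^ k)) atTop ≤ specRad W * specRad V := by
  haveI : Nonempty (Fin n) := ⟨⟨0, hn⟩⟩
  -- the pencil relations propagate through the doubling iteration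
  have key : ∀ k : ℕ,
      Ek k = (1 - Qk k * X) * W ^ 2 ^ k ∧
      X - Pk k = Fk k * X * W ^ 2 ^ k ∧
      Ek k * Y * V ^ 2 ^ k = Y - Qk k ∧
      (1 - Pk k * Y) * V ^ 2 ^ k = Fk k := by
    intro k
    induction k with
    | zero => simpa [hE0, hF0, hP0, hQ0, pow_one] using ⟨h1, h2, h3, h4⟩
    | succ k ih =>
      obtain ⟨k1, k2, k3, k4⟩ := ih
      have hB' : (1 - Qk k * Pk k)⁻¹ * (1 - Qk k * Pk k) = 1 :=
        Matrix.nonsing_inv_mul _ ((Matrix.isUnit_iff_isUnit_det _).mp (hinv1 k))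
      have hC' : (1 - Pk k * Qk k)⁻¹ * (1 - Pk k * Qk k) = 1 :=
        Matrix.nonsing_inv_mul _ ((Matrix.isUnit_iff_isUnit_det _).mp (hinv2 k))
      obtain ⟨s1, s2, s3, s4⟩ := sda_ring_step (Ek k) (Fk k) (Pk k) (Qk k) X Y
        (W ^ 2 ^ k) (V ^ 2 ^ k) (1 - Qk k * Pk k)⁻¹ (1 - Pk k * Qk k)⁻¹
        hB' hC' k1 k2 k3 k4
      have hWsq : W ^ 2 ^ (k + 1) = W ^ 2 ^ k * W ^ 2 ^ k := by
        rw [pow_succ, pow_mul, sq]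
      have hVsq : V ^ 2 ^ (k + 1) = V ^ 2 ^ k * V ^ 2 ^ k := by
        rw [pow_succ, pow_mul, sq]
      rw [hEk k, hPk k, hFk k, hQk k, hWsq, hVsq]
      exact ⟨s1, s2, s3, s4⟩
  -- it suffices to prove the bound up to an arbitrary `δ > 0`
  suffices h : ∀ δ : ℝ, 0 < δ →
      (limsup (fun k : ℕ => ‖X - Pk k‖ ^ (1 / (2 : ℝ) ^ k)) atTop ≤ specRad W * specRad V + δ) ∧
      (limsup (fun k : ℕ => ‖Y - Qk k‖ ^ (1 / (2 : ℝ) ^ k)) atTop ≤ specRad W * specRad V + δ) by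
    exact ⟨le_of_forall_pos_le_add fun δ hδ => (h δ hδ).1,
      le_of_forall_pos_le_add fun δ hδ => (h δ hδ).2⟩
  intro δ hδ
  have hρ1 : 0 ≤ specRad W := specRad_nonneg W
  have hρ2 : 0 ≤ specRad V := specRad_nonneg V
  set B0 : ℝ := specRad W + specRad V + 1 with hB0_def
  have hB0 : 0 < B0 := by rw [hB0_def]; linarith
  set ε : ℝ := min 1 (min (δ / B0) ((1 - specRad W * specRad V) / (2 * B0))) with hε_def
  have hε : 0 < ε := by
    refine lt_min one_pos (lt_min (div_pos hδ hB0) (div_pos (by linarith) (by linarith)))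
  have hε1 : ε ≤ 1 := min_le_left _ _
  have hεd : ε * B0 ≤ δ :=
    (le_div_iff₀ hB0).mp (le_trans (min_le_right _ _) (min_le_left _ _))
  have hεB : ε * (2 * B0) ≤ 1 - specRad W * specRad V :=
    (le_div_iff₀ (by linarith)).mp (le_trans (min_le_right _ _) (min_le_right _ _))
  set t1 : ℝ := specRad W + ε with ht1_def
  set t2 : ℝ := specRad V + ε with ht2_def
  have ht1 : 0 < t1 := add_pos_of_nonneg_of_pos hρ1 hε
  have ht2 : 0 < t2 := add_pos_of_nonneg_of_pos hρ2 hε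
  set s : ℝ := t1 * t2 with hs_def
  have hs0 : 0 < s := mul_pos ht1 ht2
  have hs1 : s < 1 := by
    have : s = specRad W * specRad V + ε * (specRad W + specRad V + ε) := by
      rw [hs_def, ht1_def, ht2_def]; ring
    nlinarith [hε.le, hε1, hεB, hρ1, hρ2]
  have hsδ : s ≤ specRad W * specRad V + δ := by
    have : s = specRad W * specRad V + ε * (specRad W + specRad V + ε) := by
      rw [hs_def, ht1_def, ht2_def]; ring
    nlinarith [hε.le, hε1, hεd, hρ1, hρ2]
  obtain ⟨C1, hC11, hC1⟩ := specRad_growth hn W hε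
  obtain ⟨C2, hC21, hC2⟩ := specRad_growth hn V hε
  constructor
  · -- bound for `X - Pk`
    have hrec : ∀ k : ℕ, ‖X - Pk k‖ ≤
        (‖(1 : Matrix (Fin n) (Fin n) ℝ) - X * Y‖ + ‖Y‖ * ‖X - Pk k‖) *
          ‖V ^ 2 ^ k * X * W ^ 2 ^ k‖ := by
      intro k
      obtain ⟨k1, k2, k3, k4⟩ := key k
      have e1 : X - Pk k = (1 - Pk k * Y) * (V ^ 2 ^ k * X * W ^ 2 ^ k) := by
        rw [k2, ← k4]; noncomm_ring
      have hn1 : ‖(1 : Matrix (Fin n) (Fin n) ℝ) - Pk k * Y‖ ≤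
          ‖(1 : Matrix (Fin n) (Fin n) ℝ) - X * Y‖ + ‖Y‖ * ‖X - Pk k‖ := by
        rw [show (1 : Matrix (Fin n) (Fin n) ℝ) - Pk k * Y
            = (1 - X * Y) + (X - Pk k) * Y by noncomm_ring]
        calc ‖(1 - X * Y) + (X - Pk k) * Y‖
            ≤ ‖(1 : Matrix (Fin n) (Fin n) ℝ) - X * Y‖ + ‖(X - Pk k) * Y‖ := norm_add_le _ _
          _ ≤ ‖(1 : Matrix (Fin n) (Fin n) ℝ) - X * Y‖ + ‖X - Pk k‖ * ‖Y‖ :=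
              add_le_add_right (norm_mul_le _ _) _
          _ = ‖(1 : Matrix (Fin n) (Fin n) ℝ) - X * Y‖ + ‖Y‖ * ‖X - Pk k‖ := by ring
      calc ‖X - Pk k‖ = ‖(1 - Pk k * Y) * (V ^ 2 ^ k * X * W ^ 2 ^ k)‖ := by rw [← e1]
        _ ≤ ‖(1 : Matrix (Fin n) (Fin n) ℝ) - Pk k * Y‖ * ‖V ^ 2 ^ k * X * W ^ 2 ^ k‖ :=
            norm_mul_le _ _
        _ ≤ _ := mul_le_mul_of_nonneg_right hn1 (norm_nonneg _)
    have hg : ∀ k : ℕ, ‖V ^ 2 ^ k * X * W ^ 2 ^ k‖ ≤ (C2 * ‖X‖ * C1) * s ^ 2 ^ k := by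
      intro k
      calc ‖V ^ 2 ^ k * X * W ^ 2 ^ k‖ ≤ ‖V ^ 2 ^ k * X‖ * ‖W ^ 2 ^ k‖ := norm_mul_le _ _
        _ ≤ (‖V ^ 2 ^ k‖ * ‖X‖) * ‖W ^ 2 ^ k‖ :=
            mul_le_mul_of_nonneg_right (norm_mul_le _ _) (norm_nonneg _)
        _ ≤ (C2 * t2 ^ 2 ^ k * ‖X‖) * (C1 * t1 ^ 2 ^ k) := by
            apply mul_le_mul (mul_le_mul_of_nonneg_right (hC2 _) (norm_nonneg _)) (hC1 _)
              (norm_nonneg _)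
            exact mul_nonneg (mul_nonneg (le_trans zero_le_one hC21)
              (pow_nonneg ht2.le _)) (norm_nonneg _)
        _ = (C2 * ‖X‖ * C1) * s ^ 2 ^ k := by rw [hs_def, mul_pow]; ring
    have := sda_core (fun k => ‖X - Pk k‖) (fun k => ‖V ^ 2 ^ k * X * W ^ 2 ^ k‖)
      (fun k => norm_nonneg _) _ _ (norm_nonneg _) (norm_nonneg _) hrec
      s (C2 * ‖X‖ * C1) hs0 hs1 (mul_nonneg (mul_nonneg (le_trans zero_le_one hC21)
        (norm_nonneg _)) (le_trans zero_le_one hC11)) hg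
    exact this.trans hsδ
  · -- bound for `Y - Qk`
    have hrec : ∀ k : ℕ, ‖Y - Qk k‖ ≤
        (‖(1 : Matrix (Fin n) (Fin n) ℝ) - Y * X‖ + ‖X‖ * ‖Y - Qk k‖) *
          ‖W ^ 2 ^ k * Y * V ^ 2 ^ k‖ := by
      intro k
      obtain ⟨k1, k2, k3, k4⟩ := key k
      have e2 : Y - Qk k = (1 - Qk k * X) * (W ^ 2 ^ k * Y * V ^ 2 ^ k) := by
        rw [← k3, k1]; noncomm_ring
      have hn1 : ‖(1 : Matrix (Fin n) (Fin n) ℝ) - Qk k * X‖ ≤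
          ‖(1 : Matrix (Fin n) (Fin n) ℝ) - Y * X‖ + ‖X‖ * ‖Y - Qk k‖ := by
        rw [show (1 : Matrix (Fin n) (Fin n) ℝ) - Qk k * X
            = (1 - Y * X) + (Y - Qk k) * X by noncomm_ring]
        calc ‖(1 - Y * X) + (Y - Qk k) * X‖
            ≤ ‖(1 : Matrix (Fin n) (Fin n) ℝ) - Y * X‖ + ‖(Y - Qk k) * X‖ := norm_add_le _ _
          _ ≤ ‖(1 : Matrix (Fin n) (Fin n) ℝ) - Y * X‖ + ‖Y - Qk k‖ * ‖X‖ :=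
              add_le_add_right (norm_mul_le _ _) _
          _ = ‖(1 : Matrix (Fin n) (Fin n) ℝ) - Y * X‖ + ‖X‖ * ‖Y - Qk k‖ := by ring
      calc ‖Y - Qk k‖ = ‖(1 - Qk k * X) * (W ^ 2 ^ k * Y * V ^ 2 ^ k)‖ := by rw [← e2]
        _ ≤ ‖(1 : Matrix (Fin n) (Fin n) ℝ) - Qk k * X‖ * ‖W ^ 2 ^ k * Y * V ^ 2 ^ k‖ :=
            norm_mul_le _ _
        _ ≤ _ := mul_le_mul_of_nonneg_right hn1 (norm_nonneg _)
    have hg : ∀ k : ℕ, ‖W ^ 2 ^ k * Y * V ^ 2 ^ k‖ ≤ (C1 * ‖Y‖ * C2) * s ^ 2 ^ k := by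
      intro k
      calc ‖W ^ 2 ^ k * Y * V ^ 2 ^ k‖ ≤ ‖W ^ 2 ^ k * Y‖ * ‖V ^ 2 ^ k‖ := norm_mul_le _ _
        _ ≤ (‖W ^ 2 ^ k‖ * ‖Y‖) * ‖V ^ 2 ^ k‖ :=
            mul_le_mul_of_nonneg_right (norm_mul_le _ _) (norm_nonneg _)
        _ ≤ (C1 * t1 ^ 2 ^ k * ‖Y‖) * (C2 * t2 ^ 2 ^ k) := by
            apply mul_le_mul (mul_le_mul_of_nonneg_right (hC1 _) (norm_nonneg _)) (hC2 _)
              (norm_nonneg _)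
            exact mul_nonneg (mul_nonneg (le_trans zero_le_one hC11)
              (pow_nonneg ht1.le _)) (norm_nonneg _)
        _ = (C1 * ‖Y‖ * C2) * s ^ 2 ^ k := by rw [hs_def, mul_pow]; ring
    have := sda_core (fun k => ‖Y - Qk k‖) (fun k => ‖W ^ 2 ^ k * Y * V ^ 2 ^ k‖)
      (fun k => norm_nonneg _) _ _ (norm_nonneg _) (norm_nonneg _) hrec
      s (C1 * ‖Y‖ * C2) hs0 hs1 (mul_nonneg (mul_nonneg (le_trans zero_le_one hC11)
        (norm_nonneg _)) (le_trans zero_le_one hC21)) hg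
    exact this.trans hsδ
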